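/- Let E be a finite-dimensional real normed space and V ⊆ E a subspace which is 1-complemented (there is a linear projection P : E → V with ‖P‖ ≤ 1 and P|_V = id). Let ‖·‖₀ be a norm on E with ‖x‖_E ≤ ‖x‖₀ ≤ (1+ε)‖x‖_E, let G = conv(B₀ ∪ B_V) where B₀ is the unit ball of ‖·‖₀ and B_V the unit ball of V (inside E), and let ‖·‖_W be the Minkowski functional of G. Then ‖x‖_E ≤ ‖x‖_W ≤ (1+ε)‖x‖_E for all x ∈ E, and ‖x‖_W = ‖x‖_E for all x ∈ V. -/
import Mathlib


open scoped Pointwise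

/-- the Minkowski functional of conv(B₀ ∪ B_V) is a norm
sandwiched between ‖·‖_E and (1+ε)‖·‖_E which agrees with ‖·‖_E on V. -/
theorem stmt_11 {E : Type*} [NormedAddCommGroup E] [NormedSpace ℝ E]
    [FiniteDimensional ℝ E]
    (V : Submodule ℝ E) (ε : ℝ) (hε : 0 < ε)
    (P : E →ₗ[ℝ] E) (hPrange : ∀ x, P x ∈ V) (hPid : ∀ x ∈ V, P x = x)
    (hPnorm : ∀ x, ‖P x‖ ≤ ‖x‖)
    (N₀ : E → ℝ)
    (hN₀add : ∀ x y, N₀ (x + y) ≤ N₀ x + N₀ y)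
    (hN₀smul : ∀ (a : ℝ) (x : E), N₀ (a • x) = |a| * N₀ x)
    (hN₀low : ∀ x, ‖x‖ ≤ N₀ x) (hN₀up : ∀ x, N₀ x ≤ (1 + ε) * ‖x‖) :
    ∀ G : Set E,
      G = convexHull ℝ ({x : E | N₀ x ≤ 1} ∪ {x : E | x ∈ V ∧ ‖x‖ ≤ 1}) →
      (∀ x : E, ‖x‖ ≤ gauge G x ∧ gauge G x ≤ (1 + ε) * ‖x‖) ∧
      (∀ x ∈ V, gauge G x = ‖x‖) := by
  intro G hG
  have h1ε : (0:ℝ) < 1 + ε := by linarith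
  set B₀ : Set E := {x : E | N₀ x ≤ 1} with hB₀
  set BV : Set E := {x : E | x ∈ V ∧ ‖x‖ ≤ 1} with hBV
  have hB₀G : B₀ ⊆ G := hG ▸ (Set.subset_union_left.trans (subset_convexHull ℝ _))
  have hBVG : BV ⊆ G := hG ▸ (Set.subset_union_right.trans (subset_convexHull ℝ _))
  have hball : Metric.closedBall (0:E) (1+ε)⁻¹ ⊆ B₀ := by
    intro x hx
    rw [Metric.mem_closedBall, dist_zero_right] at hx
    have h1 : N₀ x ≤ (1+ε) * (1+ε)⁻¹ :=
      (hN₀up x).trans (by exact mul_le_mul_of_nonneg_left hx h1ε.le)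
    rw [mul_inv_cancel₀ h1ε.ne'] at h1
    exact h1
  have hGball : G ⊆ Metric.closedBall (0:E) 1 := by
    rw [hG]
    apply convexHull_min _ (convex_closedBall 0 1)
    rintro x (hx | hx)
    · simpa [dist_zero_right] using (hN₀low x).trans hx
    · simpa [dist_zero_right] using hx.2
  have habs : Absorbent ℝ G :=
    (absorbent_ball_zero (by positivity : (0:ℝ) < (1+ε)⁻¹)).mono (Metric.ball_subset_closedBall.trans (hball.trans hB₀G))
  have hlow : ∀ x : E, ‖x‖ ≤ gauge G x := by
    intro x
    have := le_gauge_of_subset_closedBall habs zero_le_one hGball (x := x)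
    simpa using this
  have hup : ∀ x : E, gauge G x ≤ (1 + ε) * ‖x‖ := by
    intro x
    rcases eq_or_ne x 0 with rfl | hx0
    · simp [gauge_zero]
    · have hnx : (0:ℝ) < ‖x‖ := norm_pos_iff.2 hx0
      have ht : (0:ℝ) < (1 + ε) * ‖x‖ := by positivity
      refine gauge_le_of_mem ht.le ?_
      rw [Set.mem_smul_set_iff_inv_smul_mem₀ ht.ne']
      apply hB₀G
      show N₀ _ ≤ 1
      rw [hN₀smul, abs_of_pos (inv_pos.2 ht)]
      rw [inv_mul_le_iff₀ ht, mul_one]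
      exact hN₀up x
  have hupV : ∀ x ∈ V, gauge G x ≤ ‖x‖ := by
    intro x hx
    rcases eq_or_ne x 0 with rfl | hx0
    · simp [gauge_zero]
    · have hnx : (0:ℝ) < ‖x‖ := norm_pos_iff.2 hx0
      refine gauge_le_of_mem hnx.le ?_
      rw [Set.mem_smul_set_iff_inv_smul_mem₀ hnx.ne']
      apply hBVG
      refine ⟨V.smul_mem _ hx, ?_⟩
      rw [norm_smul, norm_inv, norm_norm, inv_mul_cancel₀ hnx.ne']
  exact ⟨fun x => ⟨hlow x, hup x⟩, fun x hx => le_antisymm (hupV x hx) (hlow x)⟩
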